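/- arXiv:2012.14980 — 5 statements merged into one kernel-verified Lean document; each statement's English description precedes it below -/
import Mathlib

section
/- Let r > 1, ψ ∈ ℝ, and for θ with θ − ψ ∈ [0, arccos(1/r)] set x(θ) = sqrt(r² + 1 − 2 r cos(θ − ψ)) and β(θ) = arcsin((r cos(θ − ψ) − 1)/x(θ)). Then β(θ) ∈ [0, π/2] for all such θ, β(ψ) = π/2, β(ψ + arccos(1/r)) = 0, and the function θ ↦ β(θ) is strictly decreasing (hence injective) on the interval [ψ, ψ + arccos(1/r)]. -/
open Real

/-- For `r > 1` and `θ − ψ ∈ [0, arccos (1/r)]`, with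
`x(θ) = √(r² + 1 − 2 r cos (θ − ψ))` and `β(θ) = arcsin ((r cos (θ − ψ) − 1) / x(θ))`:
`β(θ) ∈ [0, π/2]`, `β(ψ) = π/2`, `β(ψ + arccos (1/r)) = 0`, and `β` is strictly
decreasing (hence injective) on `[ψ, ψ + arccos (1/r)]`. -/
theorem approach_angle_monotone (r ψ : ℝ) (hr : 1 < r) (x β : ℝ → ℝ)
    (hx : ∀ θ, x θ = Real.sqrt (r ^ 2 + 1 - 2 * r * Real.cos (θ - ψ)))
    (hβ : ∀ θ, β θ = Real.arcsin ((r * Real.cos (θ - ψ) - 1) / x θ)) :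
    (∀ θ, θ - ψ ∈ Set.Icc 0 (Real.arccos (1 / r)) → β θ ∈ Set.Icc 0 (π / 2)) ∧
    β ψ = π / 2 ∧
    β (ψ + Real.arccos (1 / r)) = 0 ∧
    StrictAntiOn β (Set.Icc ψ (ψ + Real.arccos (1 / r))) := by
  have hr0 : (0:ℝ) < r := by linarith
  have hir0 : 0 < 1 / r := by positivity
  have hir1 : 1 / r ≤ 1 := by
    rw [div_le_one hr0]; linarith
  have hcosA : Real.cos (Real.arccos (1 / r)) = 1 / r :=
    Real.cos_arccos (by linarith) hir1
  have hApi : Real.arccos (1 / r) ≤ π := Real.arccos_le_pi _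
  -- basics for t ∈ [0, A]
  have hkey : ∀ t : ℝ, t ∈ Set.Icc 0 (Real.arccos (1 / r)) →
      1 / r ≤ Real.cos t ∧ 0 < r ^ 2 + 1 - 2 * r * Real.cos t := by
    intro t ht
    have h1 : Real.cos (Real.arccos (1 / r)) ≤ Real.cos t :=
      Real.cos_le_cos_of_nonneg_of_le_pi ht.1 hApi ht.2
    rw [hcosA] at h1
    have h2 : Real.cos t ≤ 1 := Real.cos_le_one t
    constructor
    · exact h1
    · nlinarith
  -- the main inequality-free facts: value of the quotient
  have hfrac : ∀ t : ℝ, t ∈ Set.Icc 0 (Real.arccos (1 / r)) →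
      0 ≤ (r * Real.cos t - 1) / Real.sqrt (r ^ 2 + 1 - 2 * r * Real.cos t) ∧
      (r * Real.cos t - 1) / Real.sqrt (r ^ 2 + 1 - 2 * r * Real.cos t) ≤ 1 := by
    intro t ht
    obtain ⟨hc, hden⟩ := hkey t ht
    have hnum : 0 ≤ r * Real.cos t - 1 := by
      have := (div_le_iff₀ hr0).mp hc
      linarith [mul_comm r (Real.cos t)]
    have hsq : 0 < Real.sqrt (r ^ 2 + 1 - 2 * r * Real.cos t) := Real.sqrt_pos.mpr hden
    constructor
    · positivity
    · rw [div_le_one hsq]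
      rw [show r * Real.cos t - 1 = Real.sqrt ((r * Real.cos t - 1) ^ 2) by
        rw [Real.sqrt_sq hnum]]
      apply Real.sqrt_le_sqrt
      nlinarith [mul_le_mul_of_nonneg_left (Real.cos_sq_le_one t) (sq_nonneg r)]
  refine ⟨?_, ?_, ?_, ?_⟩
  · intro θ hθ
    obtain ⟨h0, h1⟩ := hfrac (θ - ψ) hθ
    rw [hβ, hx]
    exact ⟨Real.arcsin_nonneg.mpr h0, Real.arcsin_le_pi_div_two _⟩
  · rw [hβ, hx]
    simp only [sub_self, Real.cos_zero]
    have h1 : r ^ 2 + 1 - 2 * r * 1 = (r - 1) ^ 2 := by ring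
    rw [h1, Real.sqrt_sq (by linarith), mul_one, div_self (by linarith)]
    exact Real.arcsin_one
  · rw [hβ, hx]
    simp only [add_sub_cancel_left, hcosA]
    rw [mul_div_cancel₀ _ (ne_of_gt hr0)]
    simp [Real.arcsin_zero]
  · intro θ₁ h₁ θ₂ h₂ hlt
    rw [hβ, hβ, hx, hx]
    set t₁ := θ₁ - ψ with ht1
    set t₂ := θ₂ - ψ with ht2
    have ht₁ : t₁ ∈ Set.Icc 0 (Real.arccos (1 / r)) :=
      ⟨sub_nonneg.mpr h₁.1, by rw [ht1]; linarith [h₁.2]⟩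
    have ht₂ : t₂ ∈ Set.Icc 0 (Real.arccos (1 / r)) :=
      ⟨sub_nonneg.mpr h₂.1, by rw [ht2]; linarith [h₂.2]⟩
    have htlt : t₁ < t₂ := sub_lt_sub_right hlt ψ
    have hcos : Real.cos t₂ < Real.cos t₁ :=
      Real.strictAntiOn_cos ⟨ht₁.1, ht₁.2.trans hApi⟩ ⟨ht₂.1, ht₂.2.trans hApi⟩ htlt
    obtain ⟨hc1, hd1⟩ := hkey t₁ ht₁
    obtain ⟨hc2, hd2⟩ := hkey t₂ ht₂
    have hnum2 : 0 ≤ r * Real.cos t₂ - 1 := by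
      have := (div_le_iff₀ hr0).mp hc2
      linarith [mul_comm r (Real.cos t₂)]
    have hnum1 : 0 < r * Real.cos t₁ - 1 := by nlinarith
    have hs1 : 0 < Real.sqrt (r ^ 2 + 1 - 2 * r * Real.cos t₁) := Real.sqrt_pos.mpr hd1
    have hs2 : 0 < Real.sqrt (r ^ 2 + 1 - 2 * r * Real.cos t₂) := Real.sqrt_pos.mpr hd2
    have hslt : Real.sqrt (r ^ 2 + 1 - 2 * r * Real.cos t₁) <
        Real.sqrt (r ^ 2 + 1 - 2 * r * Real.cos t₂) := by
      apply Real.sqrt_lt_sqrt hd1.le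
      nlinarith
    have hN : r * Real.cos t₂ - 1 < r * Real.cos t₁ - 1 := by nlinarith
    have hfraclt : (r * Real.cos t₂ - 1) / Real.sqrt (r ^ 2 + 1 - 2 * r * Real.cos t₂) <
        (r * Real.cos t₁ - 1) / Real.sqrt (r ^ 2 + 1 - 2 * r * Real.cos t₁) :=
      div_lt_div₀ hN hslt.le hnum1.le hs1
    apply Real.strictMonoOn_arcsin
    · exact ⟨by linarith [(hfrac t₂ ht₂).1], (hfrac t₂ ht₂).2⟩
    · exact ⟨by linarith [(hfrac t₁ ht₁).1], (hfrac t₁ ht₁).2⟩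
    · exact hfraclt
end

section
/- Let r > 1, ψ ∈ ℝ, and for θ with θ − ψ ∈ [0, arccos(1/r)] set x(θ) = sqrt(r² + 1 − 2 r cos(θ − ψ)) and β(θ) = arcsin((r cos(θ − ψ) − 1)/x(θ)). Then x(θ) = −sin β(θ) + sqrt(r² − cos² β(θ)). -/
open Real

/-- With `x(θ) = √(r² + 1 − 2 r cos (θ − ψ))` and
`β(θ) = arcsin ((r cos (θ − ψ) − 1)/x(θ))`, for `θ − ψ ∈ [0, arccos (1/r)]` one has
`x(θ) = −sin β(θ) + √(r² − cos² β(θ))`. -/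
theorem distance_from_approach_angle (r ψ θ : ℝ) (hr : 1 < r)
    (hθ : θ - ψ ∈ Set.Icc 0 (Real.arccos (1 / r)))
    (x β : ℝ → ℝ)
    (hx : ∀ θ, x θ = Real.sqrt (r ^ 2 + 1 - 2 * r * Real.cos (θ - ψ)))
    (hβ : ∀ θ, β θ = Real.arcsin ((r * Real.cos (θ - ψ) - 1) / x θ)) :
    x θ = -Real.sin (β θ) + Real.sqrt (r ^ 2 - Real.cos (β θ) ^ 2) := by
  obtain ⟨h0, h1⟩ := hθ
  set c : ℝ := Real.cos (θ - ψ) with hc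
  have hr0 : (0:ℝ) < r := by linarith
  have hinv : (1:ℝ)/r ∈ Set.Icc (-1:ℝ) 1 := by
    constructor
    · have : (0:ℝ) < 1/r := by positivity
      linarith
    · rw [div_le_one hr0]; linarith
  have hcle1 : c ≤ 1 := Real.cos_le_one _
  have hclow : 1/r ≤ c := by
    have h2 : Real.arccos (1/r) ≤ π := Real.arccos_le_pi _
    have := Real.cos_le_cos_of_nonneg_of_le_pi h0 h2 h1
    rwa [Real.cos_arccos hinv.1 hinv.2] at this
  have hrc1 : 1 ≤ r * c := by
    rw [div_le_iff₀ hr0] at hclow; linarith [hclow]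
  have hA : (0:ℝ) < r ^ 2 + 1 - 2 * r * c := by nlinarith
  have hX2 : (x θ) ^ 2 = r ^ 2 + 1 - 2 * r * c := by
    rw [hx θ, Real.sq_sqrt hA.le]
  have hXpos : 0 < x θ := by
    rw [hx θ]; exact Real.sqrt_pos.mpr hA
  set X := x θ with hXdef
  set s : ℝ := (r * c - 1) / X with hs
  have hs0 : 0 ≤ s := by
    apply div_nonneg (by linarith) hXpos.le
  have hXne : X ≠ 0 := hXpos.ne'
  have hc2 : c ^ 2 ≤ 1 := by rw [hc]; exact Real.cos_sq_le_one _
  have hs1 : s ≤ 1 := by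
    rw [hs, div_le_one hXpos]
    have h2 : (r * c - 1) ^ 2 ≤ X ^ 2 := by rw [hX2]; nlinarith [hc2, sq_nonneg r]
    nlinarith [h2, hXpos, hrc1]
  have hsinβ : Real.sin (β θ) = s := by
    rw [hβ θ, Real.sin_arcsin (by linarith) hs1]
  have hcosβ2 : Real.cos (β θ) ^ 2 = 1 - s ^ 2 := by
    rw [hβ θ, Real.cos_arcsin, Real.sq_sqrt (by nlinarith)]
  have hsX : s * X = r * c - 1 := by
    rw [hs]; field_simp
  have hkey : r ^ 2 - Real.cos (β θ) ^ 2 = (r * (r - c) / X) ^ 2 := by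
    rw [hcosβ2]
    have hXX : X ^ 2 * X⁻¹ ^ 2 = 1 := by field_simp
    field_simp
    linear_combination (r ^ 2 - 1) * hX2 + (r ^ 2 * c ^ 2 - 2 * r * c + 1) * hXX
  rw [hkey, Real.sqrt_sq (div_nonneg (by nlinarith) hXpos.le), hsinβ]
  have hdiv : r * (r - c) / X = X + s := by
    rw [div_eq_iff hXne]; linear_combination -hX2 - hsX
  rw [hdiv]; ring
end

section
/- Let r > 1, ψ ∈ ℝ, and for θ with θ − ψ ∈ [0, arccos(1/r)] set x(θ) = sqrt(r² + 1 − 2 r cos(θ − ψ)) and β(θ) = arcsin((r cos(θ − ψ) − 1)/x(θ)). Then θ = ψ − β(θ) + arccos(cos β(θ) / r). -/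
set_option maxHeartbeats 1000000


open Real

/-- With `x(θ) = √(r² + 1 − 2 r cos (θ − ψ))` and
`β(θ) = arcsin ((r cos (θ − ψ) − 1)/x(θ))`, for `θ − ψ ∈ [0, arccos (1/r)]` the
breaching angle satisfies `θ = ψ − β(θ) + arccos (cos β(θ) / r)`. -/
theorem breaching_angle_from_beta (r ψ θ : ℝ) (hr : 1 < r)
    (hθ : θ - ψ ∈ Set.Icc 0 (Real.arccos (1 / r)))
    (x β : ℝ → ℝ)
    (hx : ∀ θ, x θ = Real.sqrt (r ^ 2 + 1 - 2 * r * Real.cos (θ - ψ)))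
    (hβ : ∀ θ, β θ = Real.arcsin ((r * Real.cos (θ - ψ) - 1) / x θ)) :
    θ = ψ - β θ + Real.arccos (Real.cos (β θ) / r) := by
  obtain ⟨h0, h1⟩ := hθ
  set φ := θ - ψ with hφ
  have hr0 : (0:ℝ) < r := by linarith
  have hinv1 : 1 / r ≤ 1 := by
    rw [div_le_one hr0]; linarith
  have hinv0 : (0:ℝ) ≤ 1 / r := by positivity
  have harc_le : Real.arccos (1 / r) ≤ π / 2 := by
    exact (Real.arccos_le_pi_div_two).mpr hinv0
  have hφπ2 : φ ≤ π / 2 := le_trans h1 harc_le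
  have hπ := Real.pi_pos
  have hφπ : φ ≤ π := by linarith
  have hcos_ge : 1 / r ≤ Real.cos φ := by
    have h := Real.cos_le_cos_of_nonneg_of_le_pi h0 (le_trans harc_le (by linarith)) h1
    rwa [Real.cos_arccos (by linarith) hinv1] at h
  have hs : 0 ≤ Real.sin φ := Real.sin_nonneg_of_nonneg_of_le_pi h0 hφπ
  have hc1 : Real.cos φ ≤ 1 := Real.cos_le_one φ
  have hrc1 : 1 ≤ r * Real.cos φ := by
    calc (1:ℝ) = r * (1/r) := by field_simp
    _ ≤ r * Real.cos φ := by nlinarith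
  have hXdef : x θ = Real.sqrt (r ^ 2 + 1 - 2 * r * Real.cos φ) := hx θ
  have hE : (0:ℝ) < r ^ 2 + 1 - 2 * r * Real.cos φ := by nlinarith
  have hX0 : 0 < x θ := by rw [hXdef]; exact Real.sqrt_pos.mpr hE
  have hX2 : (x θ) ^ 2 = r ^ 2 + 1 - 2 * r * Real.cos φ := by
    rw [hXdef]; exact Real.sq_sqrt hE.le
  have hpyth : (r * Real.cos φ - 1) ^ 2 + (r * Real.sin φ) ^ 2 = (x θ) ^ 2 := by
    have := Real.sin_sq_add_cos_sq φ
    nlinarith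
  have hle : r * Real.cos φ - 1 ≤ x θ := by nlinarith
  have ha0 : 0 ≤ (r * Real.cos φ - 1) / x θ := div_nonneg (by linarith) hX0.le
  have ha1 : (r * Real.cos φ - 1) / x θ ≤ 1 := by
    rw [div_le_one hX0]; exact hle
  have hsinβ : Real.sin (β θ) = (r * Real.cos φ - 1) / x θ := by
    rw [hβ]; exact Real.sin_arcsin (by linarith) ha1
  have hcosβ : Real.cos (β θ) = r * Real.sin φ / x θ := by
    rw [hβ, Real.cos_arcsin]
    rw [show 1 - ((r * Real.cos φ - 1) / x θ) ^ 2 = (r * Real.sin φ / x θ) ^ 2 by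
      field_simp; nlinarith]
    exact Real.sqrt_sq (by positivity)
  have hβ0 : 0 ≤ β θ := by rw [hβ]; exact Real.arcsin_nonneg.mpr ha0
  have hβπ2 : β θ ≤ π / 2 := by rw [hβ]; exact Real.arcsin_le_pi_div_two _
  have hcosadd : Real.cos (φ + β θ) = Real.sin φ / x θ := by
    rw [Real.cos_add, hcosβ, hsinβ]
    field_simp
    ring
  have hkey : Real.arccos (Real.cos (β θ) / r) = φ + β θ := by
    rw [hcosβ, show r * Real.sin φ / x θ / r = Real.sin φ / x θ by
      field_simp, ← hcosadd]
    exact Real.arccos_cos (by linarith) (by linarith)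
  rw [hkey]; linarith
end

section
/- Let r > 1, ν ∈ (0, 1], φ_D ∈ (0, π/2], ψ ∈ [0, π/2). For θ with θ − ψ ∈ [0, arccos(1/r)] define x(θ) = sqrt(r² + 1 − 2 r cos(θ − ψ)), β(θ) = arcsin((r cos(θ − ψ) − 1)/x(θ)), and the payoff p(θ) = arccos(cos φ_D cos θ) − x(θ)/ν. If θ* is an interior point of [ψ, ψ + arccos(1/r)] at which p attains its maximum over this interval, then cos β(θ*) = ν cos φ_D sin θ* / sqrt(1 − cos² φ_D cos² θ*); equivalently, the optimal approach angle satisfies β(θ*) = arccos(ν cos φ_D sin θ* / sqrt(1 − cos² φ_D cos² θ*)). -/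
set_option maxHeartbeats 1000000


open Real

/-- First-order optimality condition: if `θ*` is an interior maximizer of the payoff
`p(θ) = arccos (cos φ_D cos θ) − x(θ)/ν` over `[ψ, ψ + arccos (1/r)]`, then the
optimal approach angle satisfies
`cos β(θ*) = ν cos φ_D sin θ* / √(1 − cos² φ_D cos² θ*)`, equivalently
`β(θ*) = arccos (ν cos φ_D sin θ* / √(1 − cos² φ_D cos² θ*))`. -/
theorem optimal_approach_angle (r ν φD ψ θs : ℝ) (hr : 1 < r)
    (hν : ν ∈ Set.Ioc 0 1) (hφ : φD ∈ Set.Ioc 0 (π / 2)) (hψ : ψ ∈ Set.Ico 0 (π / 2))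
    (x β p : ℝ → ℝ)
    (hx : ∀ θ, x θ = Real.sqrt (r ^ 2 + 1 - 2 * r * Real.cos (θ - ψ)))
    (hβ : ∀ θ, β θ = Real.arcsin ((r * Real.cos (θ - ψ) - 1) / x θ))
    (hp : ∀ θ, p θ = Real.arccos (Real.cos φD * Real.cos θ) - x θ / ν)
    (hθs : θs ∈ Set.Ioo ψ (ψ + Real.arccos (1 / r)))
    (hmax : IsMaxOn p (Set.Icc ψ (ψ + Real.arccos (1 / r))) θs) :
    Real.cos (β θs)
      = ν * Real.cos φD * Real.sin θs / Real.sqrt (1 - Real.cos φD ^ 2 * Real.cos θs ^ 2) ∧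
    β θs = Real.arccos
      (ν * Real.cos φD * Real.sin θs / Real.sqrt (1 - Real.cos φD ^ 2 * Real.cos θs ^ 2)) := by
  obtain ⟨hν0, hν1⟩ := hν
  obtain ⟨hφ0, hφ2⟩ := hφ
  set c := Real.cos φD with hc
  have hc0 : 0 ≤ c := Real.cos_nonneg_of_mem_Icc ⟨by linarith [Real.pi_pos], hφ2⟩
  have hsφ : 0 < Real.sin φD := Real.sin_pos_of_pos_of_lt_pi hφ0 (by linarith [Real.pi_pos])
  have hc2 : c ^ 2 < 1 := by
    have := Real.sin_sq_add_cos_sq φD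
    nlinarith
  -- bounds on δ = θs - ψ
  set δ := θs - ψ with hδ
  have hr0 : (0:ℝ) < r := by linarith
  have hinv : (1:ℝ)/r ∈ Set.Ioo (0:ℝ) 1 := ⟨by positivity, by rw [div_lt_one hr0]; linarith⟩
  have hδ0 : 0 < δ := by rw [hδ]; linarith [hθs.1]
  have hδlt : δ < Real.arccos (1/r) := by rw [hδ]; linarith [hθs.2]
  have hδπ : δ < π := lt_of_lt_of_le hδlt (Real.arccos_le_pi _)
  have hsinδ : 0 < Real.sin δ := Real.sin_pos_of_pos_of_lt_pi hδ0 hδπ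
  have hcosδ : 1/r < Real.cos δ := by
    have h := Real.cos_lt_cos_of_nonneg_of_le_pi hδ0.le (Real.arccos_le_pi _) hδlt
    rwa [Real.cos_arccos (by linarith [hinv.1]) hinv.2.le] at h
  -- x θs
  set f : ℝ → ℝ := fun θ => r ^ 2 + 1 - 2 * r * Real.cos (θ - ψ) with hf
  have hfpos : 0 < f θs := by
    have : Real.cos (θs - ψ) ≤ 1 := Real.cos_le_one _
    simp only [hf]; nlinarith
  set xs := Real.sqrt (f θs) with hxs
  have hxpos : 0 < xs := Real.sqrt_pos.mpr hfpos
  have hxsq : xs ^ 2 = f θs := Real.sq_sqrt hfpos.le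
  have hxeq : x θs = xs := hx θs
  -- S
  have hS2 : 0 < 1 - c ^ 2 * Real.cos θs ^ 2 := by
    have h1 : Real.cos θs ^ 2 ≤ 1 := by
      nlinarith [Real.sin_sq_add_cos_sq θs, sq_nonneg (Real.sin θs)]
    nlinarith
  set S := Real.sqrt (1 - c ^ 2 * Real.cos θs ^ 2) with hSdef
  have hSpos : 0 < S := Real.sqrt_pos.mpr hS2
  have hSsq : S ^ 2 = 1 - c ^ 2 * Real.cos θs ^ 2 := Real.sq_sqrt hS2.le
  -- derivative of p at θs
  have hu1 : c * Real.cos θs ≠ 1 := by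
    intro h; nlinarith [Real.sin_sq_add_cos_sq θs, Real.neg_one_le_cos θs, Real.cos_le_one θs]
  have hum1 : c * Real.cos θs ≠ -1 := by
    intro h; nlinarith [Real.sin_sq_add_cos_sq θs, Real.neg_one_le_cos θs, Real.cos_le_one θs]
  have hd1 : HasDerivAt (fun θ => Real.arccos (c * Real.cos θ))
      (-(1 / Real.sqrt (1 - (c * Real.cos θs) ^ 2)) * (c * -Real.sin θs)) θs :=
    by have := (Real.hasDerivAt_arccos hum1 hu1).comp θs ((Real.hasDerivAt_cos θs).const_mul c); exact this
  have hdf : HasDerivAt f (2 * r * Real.sin δ) θs := by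
    have h1 : HasDerivAt (fun θ : ℝ => θ - ψ) 1 θs := (hasDerivAt_id θs).sub_const ψ
    have h2 : HasDerivAt (fun θ => Real.cos (θ - ψ)) (-Real.sin δ * 1) θs :=
      by have := (Real.hasDerivAt_cos δ).comp θs h1; exact this
    have h3 := ((h2.const_mul (2*r)).const_sub (r ^ 2 + 1))
    rw [show (2 * r * Real.sin δ) = -(2 * r * (-Real.sin δ * 1)) by ring]
    exact h3
  have hdx : HasDerivAt (fun θ => Real.sqrt (f θ)) (1 / (2 * xs) * (2 * r * Real.sin δ)) θs :=
    (Real.hasDerivAt_sqrt hfpos.ne').comp θs hdf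
  have hdp : HasDerivAt p
      (-(1 / Real.sqrt (1 - (c * Real.cos θs) ^ 2)) * (c * -Real.sin θs)
        - 1 / (2 * xs) * (2 * r * Real.sin δ) / ν) θs := by
    have hpe : p = fun θ => Real.arccos (c * Real.cos θ) - Real.sqrt (f θ) / ν := by
      funext θ; rw [hp θ, hx θ]
    rw [hpe]
    exact hd1.sub (hdx.div_const ν)
  -- interior max ⇒ derivative zero
  have hloc : IsLocalMax p θs := hmax.isLocalMax (Icc_mem_nhds (by linarith [hθs.1]) (by linarith [hθs.2]))
  have hzero := hloc.hasDerivAt_eq_zero hdp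
  have hSrw : Real.sqrt (1 - (c * Real.cos θs) ^ 2) = S := by rw [hSdef]; ring_nf
  rw [hSrw] at hzero
  clear_value S xs f δ c
  -- FOC: ν * c * sin θs / S = r * sin δ / xs
  have hfoc : ν * c * Real.sin θs / S = r * Real.sin δ / xs := by
    field_simp at hzero ⊢
    nlinarith [hzero]
  -- cos β θs = r sin δ / xs
  have hcosβ : Real.cos (β θs) = r * Real.sin δ / xs := by
    rw [hβ θs, Real.cos_arcsin, hxeq, ← hδ]
    have h1 : 1 - ((r * Real.cos δ - 1) / xs) ^ 2 = (r * Real.sin δ / xs) ^ 2 := by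
      field_simp
      have : xs ^ 2 = r ^ 2 + 1 - 2 * r * Real.cos δ := by rw [hxsq, hf]; simp only []; rw [hδ]
      nlinarith [Real.sin_sq_add_cos_sq δ]
    rw [h1, Real.sqrt_sq (by positivity)]
  have hmain : Real.cos (β θs) = ν * c * Real.sin θs / S := by rw [hcosβ, hfoc]
  refine ⟨hmain, ?_⟩
  -- β θs ∈ [0, π/2]
  have hspos : 0 < (r * Real.cos δ - 1) / xs := by
    have h1 : 1 < r * Real.cos δ := by
      rw [div_lt_iff₀ hr0] at hcosδ; linarith [hcosδ]
    exact div_pos (by linarith) hxpos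
  have hβpos : 0 < β θs := by
    rw [hβ θs, hxeq, ← hδ]; exact Real.arcsin_pos.mpr hspos
  have hβle : β θs ≤ π / 2 := by rw [hβ θs]; exact Real.arcsin_le_pi_div_two _
  rw [← hmain, Real.arccos_cos hβpos.le (by linarith [Real.pi_pos])]
end

section
/- Let r > 1, ψ ∈ ℝ, and for θ with θ − ψ ∈ [0, arccos(1/r)] set x(θ) = sqrt(r² + 1 − 2 r cos(θ − ψ)) and β(θ) = arcsin((r cos(θ − ψ) − 1)/x(θ)). Then r cos(θ − ψ) = sin β(θ) · sqrt(r² − cos² β(θ)) + cos² β(θ). -/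
open Real

/-- With `x(θ) = √(r² + 1 − 2 r cos (θ − ψ))` and
`β(θ) = arcsin ((r cos (θ − ψ) − 1)/x(θ))`, for `θ − ψ ∈ [0, arccos (1/r)]` one has
`r cos (θ − ψ) = sin β(θ) · √(r² − cos² β(θ)) + cos² β(θ)`. -/
theorem r_cos_relation (r ψ θ : ℝ) (hr : 1 < r)
    (hθ : θ - ψ ∈ Set.Icc 0 (Real.arccos (1 / r)))
    (x β : ℝ → ℝ)
    (hx : ∀ θ, x θ = Real.sqrt (r ^ 2 + 1 - 2 * r * Real.cos (θ - ψ)))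
    (hβ : ∀ θ, β θ = Real.arcsin ((r * Real.cos (θ - ψ) - 1) / x θ)) :
    r * Real.cos (θ - ψ)
      = Real.sin (β θ) * Real.sqrt (r ^ 2 - Real.cos (β θ) ^ 2) + Real.cos (β θ) ^ 2 := by
  obtain ⟨h0, h1⟩ := hθ
  set c := Real.cos (θ - ψ) with hc
  have hr0 : (0:ℝ) < r := by linarith
  have hcle : c ≤ 1 := Real.cos_le_one _
  have h1r : 1 / r ≤ c := by
    have h := Real.cos_le_cos_of_nonneg_of_le_pi h0 (Real.arccos_le_pi _) h1
    rwa [Real.cos_arccos (by nlinarith [one_div_pos.mpr hr0]) (by rw [div_le_one hr0]; linarith)] at h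
  have hrc : 1 ≤ r * c := by
    rw [mul_comm]; exact (div_le_iff₀ hr0).mp h1r
  have hc0 : 0 < c := lt_of_lt_of_le (by positivity) h1r
  have hq : (0:ℝ) < r ^ 2 + 1 - 2 * r * c := by nlinarith
  have hxpos : 0 < x θ := by rw [hx]; exact Real.sqrt_pos.mpr hq
  have hx2 : x θ ^ 2 = r ^ 2 + 1 - 2 * r * c := by
    rw [hx]; exact Real.sq_sqrt hq.le
  set s := (r * c - 1) / x θ with hs
  have hs0 : 0 ≤ s := div_nonneg (by linarith) hxpos.le
  have hkey : x θ ^ 2 - (r * c - 1) ^ 2 = r ^ 2 * (1 - c ^ 2) := by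
    rw [hx2]; ring
  have hs1 : s ≤ 1 := by
    rw [hs, div_le_one hxpos]
    nlinarith [hkey, hxpos, hrc, hcle, hc0, mul_pos hxpos hxpos,
      mul_nonneg (sq_nonneg r) (mul_nonneg (by linarith : (0:ℝ) ≤ 1 - c) (by linarith : (0:ℝ) ≤ 1 + c))]
  have hsin : Real.sin (β θ) = s := by
    rw [hβ, Real.sin_arcsin (by linarith) hs1]
  have hcos2 : Real.cos (β θ) ^ 2 = 1 - s ^ 2 := by
    rw [hβ, Real.cos_arcsin]
    exact Real.sq_sqrt (by nlinarith)
  have hA : r ^ 2 - Real.cos (β θ) ^ 2 = (r * (r - c) / x θ) ^ 2 := by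
    rw [hcos2, hs]
    field_simp
    linear_combination (r ^ 2 - 1) * hx2
  have hsq : Real.sqrt (r ^ 2 - Real.cos (β θ) ^ 2) = r * (r - c) / x θ := by
    rw [hA, Real.sqrt_sq (div_nonneg (mul_nonneg hr0.le (by linarith)) hxpos.le)]
  rw [hsin, hsq, hcos2, hs]
  field_simp
  linear_combination (r * c - 1) * hx2
end
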